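/- Let 0 < ρ ≤ 1 and let B₁, B₂ be independent {0,1}-valued random variables with P(B₁ = 1) = P(B₂ = 1) = ρ. Let ω₁, ω₁* ∈ ℝⁿ, ω₂, ω₂* ∈ ℝ^{n×d}, z ∈ ℝ^d, and set y = ρ·ω₁*ᵀω₂*z. Define the stochastic gradients g₁ = (ω₁ᵀ(B₁ ω₂ z) − y)·(B₂ ω₂ z) ∈ ℝⁿ and g₂ = (ω₁ᵀ(B₁ ω₂ z) − y)·ω₁ (B₂ z)ᵀ ∈ ℝ^{n×d}. Then E[g₁] = ρ² (ω₁ᵀω₂z − ω₁*ᵀω₂*z) ω₂ z and E[g₂] = ρ² (ω₁ᵀω₂z − ω₁*ᵀω₂*z) ω₁ zᵀ. -/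

import Mathlib

open Matrix MeasureTheory ProbabilityTheory

/-- Lemma 3 of the paper (unbiasedness of the stochastic gradients).
With independent Bernoulli(ρ) activations `B₁, B₂` and realizable labels
`y = ρ ω₁*ᵀω₂*z`, the stochastic gradients
`g₁ = (ω₁ᵀ(B₁ω₂z) − y)·(B₂ω₂z)` and `g₂ = (ω₁ᵀ(B₁ω₂z) − y)·ω₁(B₂z)ᵀ` satisfy
`E[g₁] = ρ²(ω₁ᵀω₂z − ω₁*ᵀω₂*z) ω₂z` and `E[g₂] = ρ²(ω₁ᵀω₂z − ω₁*ᵀω₂*z) ω₁zᵀ`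
(stated componentwise). -/
theorem relu_expected_gradients
    (n d : ℕ) (ρ : ℝ) (hρ0 : 0 < ρ) (hρ1 : ρ ≤ 1)
    {Ω : Type} [MeasurableSpace Ω] (μ : Measure Ω) [IsProbabilityMeasure μ]
    (B₁ B₂ : Ω → ℝ)
    (hB₁meas : Measurable B₁) (hB₂meas : Measurable B₂)
    (hB₁01 : ∀ x, B₁ x = 0 ∨ B₁ x = 1) (hB₂01 : ∀ x, B₂ x = 0 ∨ B₂ x = 1)
    (hB₁p : μ {x | B₁ x = 1} = ENNReal.ofReal ρ)
    (hB₂p : μ {x | B₂ x = 1} = ENNReal.ofReal ρ)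
    (hindep : IndepFun B₁ B₂ μ)
    (ω₁ ω₁s : Fin n → ℝ) (ω₂ ω₂s : Matrix (Fin n) (Fin d) ℝ) (z : Fin d → ℝ)
    (y : ℝ) (hy : y = ρ * (ω₁s ⬝ᵥ (ω₂s *ᵥ z))) :
    (∀ i, ∫ x, (ω₁ ⬝ᵥ (B₁ x • (ω₂ *ᵥ z)) - y) * (B₂ x • (ω₂ *ᵥ z)) i ∂μ
        = ρ ^ 2 * (ω₁ ⬝ᵥ (ω₂ *ᵥ z) - ω₁s ⬝ᵥ (ω₂s *ᵥ z)) * (ω₂ *ᵥ z) i)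
    ∧ (∀ i j, ∫ x, (ω₁ ⬝ᵥ (B₁ x • (ω₂ *ᵥ z)) - y) * (ω₁ i * (B₂ x * z j)) ∂μ
        = ρ ^ 2 * (ω₁ ⬝ᵥ (ω₂ *ᵥ z) - ω₁s ⬝ᵥ (ω₂s *ᵥ z)) * (ω₁ i * z j)) := by
  set A : ℝ := ω₁ ⬝ᵥ (ω₂ *ᵥ z) with hA
  set b : ℝ := ω₁s ⬝ᵥ (ω₂s *ᵥ z) with hb
  have hS₁ : MeasurableSet (B₁ ⁻¹' {(1:ℝ)}) := hB₁meas (measurableSet_singleton 1)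
  have hS₂ : MeasurableSet (B₂ ⁻¹' {(1:ℝ)}) := hB₂meas (measurableSet_singleton 1)
  have hset₂ : B₂ ⁻¹' {(1:ℝ)} = {x | B₂ x = 1} := by ext x; simp
  have hind₂ : ∀ x, B₂ x = (B₂ ⁻¹' {(1:ℝ)}).indicator 1 x := by
    intro x
    rcases hB₂01 x with h | h <;>
      simp [Set.indicator_apply, Set.mem_preimage, h]
  have hindP : ∀ x, B₁ x * B₂ x
      = ((B₁ ⁻¹' {(1:ℝ)}) ∩ (B₂ ⁻¹' {(1:ℝ)})).indicator 1 x := by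
    intro x
    rcases hB₁01 x with h1 | h1 <;> rcases hB₂01 x with h2 | h2 <;>
      simp [Set.indicator_apply, Set.mem_preimage, h1, h2]
  have hint₂ : Integrable B₂ μ := by
    refine ((integrable_const (1:ℝ)).indicator hS₂).congr ?_
    filter_upwards with x using (hind₂ x).symm
  have hintP : Integrable (fun x => B₁ x * B₂ x) μ := by
    refine ((integrable_const (1:ℝ)).indicator (hS₁.inter hS₂)).congr ?_
    filter_upwards with x using (hindP x).symm
  have hI₂ : ∫ x, B₂ x ∂μ = ρ := by
    rw [integral_congr_ae (Filter.Eventually.of_forall hind₂),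
      integral_indicator_one hS₂, measureReal_def, hset₂, hB₂p, ENNReal.toReal_ofReal hρ0.le]
  have hIP : ∫ x, B₁ x * B₂ x ∂μ = ρ ^ 2 := by
    rw [integral_congr_ae (Filter.Eventually.of_forall hindP),
      integral_indicator_one (hS₁.inter hS₂), measureReal_def,
      hindep.measure_inter_preimage_eq_mul _ _ (measurableSet_singleton 1)
        (measurableSet_singleton 1)]
    have h1 : B₁ ⁻¹' {(1:ℝ)} = {x | B₁ x = 1} := by ext x; simp
    rw [h1, hset₂, hB₁p, hB₂p, ← ENNReal.ofReal_mul hρ0.le,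
      ENNReal.toReal_ofReal (by positivity)]
    ring
  have key : ∀ c : ℝ, ∫ x, (B₁ x * A - y) * (B₂ x * c) ∂μ = ρ ^ 2 * (A - b) * c := by
    intro c
    have heq : ∀ x, (B₁ x * A - y) * (B₂ x * c)
        = (A * c) * (B₁ x * B₂ x) - (y * c) * B₂ x := by intro x; ring
    rw [integral_congr_ae (Filter.Eventually.of_forall heq),
      integral_sub ((hintP.const_mul _)) ((hint₂.const_mul _)),
      integral_const_mul, integral_const_mul, hIP, hI₂, hy]
    ring
  constructor
  · intro i
    have := key ((ω₂ *ᵥ z) i)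
    rw [← this]
    refine integral_congr_ae (Filter.Eventually.of_forall fun x => ?_)
    simp [dotProduct_smul, Pi.smul_apply, smul_eq_mul, hA]
  · intro i j
    have := key (ω₁ i * z j)
    rw [← this]
    refine integral_congr_ae (Filter.Eventually.of_forall fun x => ?_)
    dsimp only
    rw [dotProduct_smul, smul_eq_mul, ← hA]
    ring
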